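/- Let m ≥ 2 be even, and for real a with a ≠ 1 and a ≠ −1 define X̃_j(a) = √(f(a))·X_j(a), where f(a) = ((a+1)(a^m−1))/(m(a−1)(a^m+1)) and √ is the nonnegative real square root. Then as a → −1 along real numbers a ≠ −1: (i) for every 0 ≤ j ≤ m−1 with j ≠ m/2, X̃_j(a) tends to 0; and (ii) the modulus |X̃_{m/2}(a)| tends to 1. -/

import Mathlib

open Finset Filter

/-- `Q m = exp(πi/m)`. -/
noncomputable def Q (m : ℕ) : ℂ := Complex.exp (Real.pi * Complex.I / m)

/-- The Fateev–Zamolodchikov coefficients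
`X_j(a) = ∏_{k=0}^{j-1} (a·Q^k − Q^{−k})/(Q^{k+1} − a·Q^{−k−1})`. -/
noncomputable def X (m j : ℕ) (a : ℂ) : ℂ :=
  ∏ k ∈ Finset.range j,
    (a * Q m ^ k - Q m ^ (-(k : ℤ))) / (Q m ^ (k + 1) - a * Q m ^ (-((k : ℤ) + 1)))

/-- The normalization factor `f(a) = ((a+1)(a^m−1))/(m(a−1)(a^m+1))`. -/
noncomputable def f (m : ℕ) (a : ℝ) : ℝ :=
  ((a + 1) * (a ^ m - 1)) / (m * (a - 1) * (a ^ m + 1))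

/-- The normalized coefficient `X̃_j(a) = √(f(a))·X_j(a)` for real `a`. -/
noncomputable def Xtilde (m j : ℕ) (a : ℝ) : ℂ :=
  (Real.sqrt (f m a) : ℂ) * X m j (a : ℂ)

lemma Qz (m : ℕ) (n : ℤ) : Q m ^ n = Complex.exp (n * (Real.pi * Complex.I / m)) := by
  rw [Q, ← Complex.exp_int_mul]

lemma Qexp (m : ℕ) (hm : 0 < m) (n : ℤ) :
    Q m ^ n = Complex.exp (((n * Real.pi / m : ℝ) : ℂ) * Complex.I) := by
  rw [Qz]
  congr 1
  have : (m : ℂ) ≠ 0 := Nat.cast_ne_zero.2 hm.ne'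
  push_cast
  field_simp

lemma Qadd (m : ℕ) (hm : 0 < m) (k : ℕ) :
    Q m ^ (k : ℤ) + Q m ^ (-(k : ℤ)) = ((2 * Real.cos (k * Real.pi / m) : ℝ) : ℂ) := by
  rw [Qexp m hm, Qexp m hm]
  rw [Complex.exp_mul_I, Complex.exp_mul_I]
  have h1 : ((((-(k:ℤ)) : ℤ) * Real.pi / m : ℝ) : ℂ) = -(((k:ℤ) * Real.pi / m : ℝ) : ℂ) := by
    push_cast; ring
  rw [h1, Complex.cos_neg, Complex.sin_neg, ← Complex.ofReal_cos]
  push_cast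
  ring

lemma cos_ne (m c t : ℕ) (hmc : m = 2 * c) (hc : 0 < c) (ht0 : 0 < t) (htm : t < m) (htc : t ≠ c) :
    Real.cos (t * Real.pi / m) ≠ 0 := by
  intro h
  rw [Real.cos_eq_zero_iff] at h
  obtain ⟨n, hn⟩ := h
  have hπ : (0:ℝ) < Real.pi := Real.pi_pos
  have hm0 : (m:ℝ) ≠ 0 := Nat.cast_ne_zero.2 (by omega)
  have key : (2 * t : ℝ) = (2 * n + 1) * m := by
    field_simp at hn
    nlinarith [hn]
  have keyz : (2 * t : ℤ) = (2 * n + 1) * m := by exact_mod_cast key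
  have hmz : (m : ℤ) = 2 * c := by exact_mod_cast hmc
  rw [hmz] at keyz
  have htz : (t : ℤ) = (2 * n + 1) * c := by linarith
  have hcz : (0:ℤ) < c := by exact_mod_cast hc
  have ht0z : (0:ℤ) < t := by exact_mod_cast ht0
  have htmz : (t:ℤ) < 2 * c := by rw [← hmz]; exact_mod_cast htm
  have htcz : (t:ℤ) ≠ c := by exact_mod_cast htc
  rcases lt_trichotomy n 0 with h | h | h
  · nlinarith
  · simp [h] at htz; exact htcz (by linarith)
  · nlinarith

lemma QI (m c : ℕ) (hmc : m = 2 * c) (hc : 0 < c) : Q m ^ (c : ℤ) = Complex.I := by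
  rw [Qz]
  have hc0 : (c : ℂ) ≠ 0 := Nat.cast_ne_zero.2 hc.ne'
  have : ((c:ℤ) : ℂ) * (Real.pi * Complex.I / m) = (Real.pi / 2 : ℝ) * Complex.I := by
    subst hmc; push_cast; field_simp
  rw [this, Complex.exp_mul_I]
  push_cast
  rw [Complex.cos_pi_div_two, Complex.sin_pi_div_two]
  ring

lemma QnI (m c : ℕ) (hmc : m = 2 * c) (hc : 0 < c) : Q m ^ (-(c : ℤ)) = -Complex.I := by
  rw [zpow_neg, QI m c hmc hc, Complex.inv_I]

lemma telescope {g : ℕ → ℂ} : ∀ n : ℕ, (∀ k, k ≤ n → g k ≠ 0) →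
    (∏ k ∈ Finset.range n, g k / g (k + 1)) * g n = g 0 := by
  intro n
  induction n with
  | zero => simp
  | succ n ih =>
    intro h
    rw [Finset.prod_range_succ]
    have hn1 : g (n + 1) ≠ 0 := h (n + 1) le_rfl
    rw [mul_assoc, div_mul_cancel₀ _ hn1, ih (fun k hk => h k (hk.trans (Nat.le_succ n)))]

/-- Numerator factor. -/
noncomputable def Nk (m k : ℕ) (a : ℝ) : ℂ := (a:ℂ) * Q m ^ k - Q m ^ (-(k : ℤ))
/-- Denominator factor. -/
noncomputable def Dk (m k : ℕ) (a : ℝ) : ℂ := Q m ^ (k + 1) - (a:ℂ) * Q m ^ (-((k : ℤ) + 1))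
/-- Full factor. -/
noncomputable def Fk (m k : ℕ) (a : ℝ) : ℂ := Nk m k a / Dk m k a

lemma X_eq (m j : ℕ) (a : ℝ) : X m j (a:ℂ) = ∏ k ∈ Finset.range j, Fk m k a := rfl

lemma Nk_neg_one (m : ℕ) (hm : 0 < m) (k : ℕ) :
    Nk m k (-1) = -(((2 * Real.cos (k * Real.pi / m)) : ℝ) : ℂ) := by
  have := Qadd m hm k
  unfold Nk
  rw [← zpow_natCast (Q m) k]
  push_cast at this ⊢
  linear_combination -this

lemma Dk_neg_one (m : ℕ) (hm : 0 < m) (k : ℕ) :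
    Dk m k (-1) = (((2 * Real.cos ((k+1) * Real.pi / m)) : ℝ) : ℂ) := by
  have := Qadd m hm (k+1)
  unfold Dk
  rw [← zpow_natCast (Q m) (k+1)]
  push_cast at this ⊢
  linear_combination this

lemma Nk_cont (m k : ℕ) : Continuous (Nk m k) := by
  unfold Nk; fun_prop

lemma Dk_cont (m k : ℕ) : Continuous (Dk m k) := by
  unfold Dk; fun_prop

lemma Fk_cont (m k : ℕ) (h : Dk m k (-1) ≠ 0) : ContinuousAt (Fk m k) (-1) :=
  ContinuousAt.div (Nk_cont m k).continuousAt (Dk_cont m k).continuousAt h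

lemma Dk_ne (m c k : ℕ) (hmc : m = 2 * c) (hc : 0 < c) (hk : k + 1 < m) (hkc : k + 1 ≠ c) :
    Dk m k (-1) ≠ 0 := by
  rw [Dk_neg_one m (by omega) k]
  rw [Complex.ofReal_ne_zero]
  have := cos_ne m c (k+1) hmc hc (by omega) hk hkc
  push_cast at this ⊢
  intro h
  apply this
  linarith

lemma Dcm1 (m c : ℕ) (hmc : m = 2 * c) (hc : 0 < c) (a : ℝ) :
    Dk m (c - 1) a = Complex.I * (1 + a) := by
  unfold Dk
  have h1 : c - 1 + 1 = c := by omega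
  have h2 : (-(((c-1 : ℕ) : ℤ) + 1)) = -(c : ℤ) := by omega
  rw [h1, h2, ← zpow_natCast (Q m) c, QI m c hmc hc, QnI m c hmc hc]
  ring

lemma Nc (m c : ℕ) (hmc : m = 2 * c) (hc : 0 < c) (a : ℝ) :
    Nk m c a = Complex.I * (1 + a) := by
  unfold Nk
  rw [← zpow_natCast (Q m) c, QI m c hmc hc, QnI m c hmc hc]
  ring

/-- `h' m c a = (∑_{i<c} a^{2i}) / (m(a^m+1))`. -/
noncomputable def hh (m c : ℕ) (a : ℝ) : ℝ :=
  (∑ i ∈ Finset.range c, (a ^ 2) ^ i) / (m * (a ^ m + 1))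

lemma apow_pos (m : ℕ) (hme : Even m) (a : ℝ) : (0:ℝ) < a ^ m + 1 := by
  have := hme.pow_nonneg a
  linarith

lemma f_factor (m c : ℕ) (hmc : m = 2 * c) (hm : 0 < m) (hme : Even m) (a : ℝ) (ha : a ≠ 1) :
    f m a = (a + 1) ^ 2 * hh m c a := by
  have hpow : a ^ m = (a ^ 2) ^ c := by rw [hmc, pow_mul]
  have hgeom : (∑ i ∈ Finset.range c, (a ^ 2) ^ i) * (a ^ 2 - 1) = a ^ m - 1 := by
    rw [geom_sum_mul, ← hpow]
  have hd : a ^ m + 1 ≠ 0 := (apow_pos m hme a).ne'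
  have hm0 : (m : ℝ) ≠ 0 := Nat.cast_ne_zero.2 hm.ne'
  have ha1 : a - 1 ≠ 0 := sub_ne_zero.mpr ha
  unfold f hh
  rw [← hgeom]
  field_simp
  ring

/-- The regular part of `X` at `j = m/2`. -/
noncomputable def Pf (m c : ℕ) (a : ℝ) : ℂ :=
  (∏ k ∈ Finset.range (c - 1), Fk m k a) * Nk m (c - 1) a

lemma X_half (m c : ℕ) (hmc : m = 2 * c) (hc : 0 < c) (a : ℝ) :
    X m c (a : ℂ) = Pf m c a / (Complex.I * (1 + (a : ℂ))) := by
  rw [X_eq]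
  conv_lhs => rw [show c = c - 1 + 1 from by omega]
  rw [Finset.prod_range_succ]
  unfold Pf Fk
  rw [Dcm1 m c hmc hc a, mul_div_assoc]

lemma Pf_cont (m c : ℕ) (hmc : m = 2 * c) (hc : 0 < c) : ContinuousAt (Pf m c) (-1) := by
  apply ContinuousAt.mul
  · exact tendsto_finset_prod _ (fun k hk => by
      have hk' : k < c - 1 := Finset.mem_range.mp hk
      exact (Fk_cont m k (Dk_ne m c k hmc hc (by omega) (by omega))).tendsto)
  · exact (Nk_cont m (c - 1)).continuousAt

lemma Pf_val (m c : ℕ) (hmc : m = 2 * c) (hc : 0 < c) :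
    ‖Pf m c (-1)‖ = 2 := by
  have hm0 : 0 < m := by omega
  set g : ℕ → ℂ := fun t => ((2 * Real.cos (t * Real.pi / m) : ℝ) : ℂ) with hg
  have hFk : ∀ k ∈ Finset.range (c - 1), Fk m k (-1) = -1 * (g k / g (k + 1)) := by
    intro k hk
    unfold Fk
    rw [Nk_neg_one m hm0 k, Dk_neg_one m hm0 k, hg]
    push_cast
    ring
  have hgne : ∀ k, k ≤ c - 1 → g k ≠ 0 := by
    intro k hk
    rw [hg]
    simp only [Complex.ofReal_ne_zero]
    rcases Nat.eq_zero_or_pos k with h0 | h0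
    · subst h0; norm_num
    · have := cos_ne m c k hmc hc h0 (by omega) (by omega)
      intro hcontra; apply this; linarith
  have htel := telescope (g := g) (c - 1) hgne
  have hg0 : g 0 = 2 := by rw [hg]; norm_num
  have hNc1 : Nk m (c - 1) (-1) = -(g (c - 1)) := Nk_neg_one m hm0 (c - 1)
  unfold Pf
  rw [Finset.prod_congr rfl hFk, Finset.prod_mul_distrib, Finset.prod_const,
    Finset.card_range, hNc1]
  have : ((-1 : ℂ)) ^ (c - 1) * (∏ k ∈ Finset.range (c - 1), g k / g (k + 1)) * -(g (c - 1))
      = (-1) ^ (c - 1) * -((∏ k ∈ Finset.range (c - 1), g k / g (k + 1)) * g (c - 1)) := by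
    ring
  rw [this, htel, hg0]
  rw [norm_mul, norm_pow]
  simp

/-- For even `m`, as `a → −1` (along real `a ≠ −1`) the normalized coefficients
`X̃_j(a)` tend to `0` for `j ≠ m/2`, while `|X̃_{m/2}(a)|` tends to `1`. -/
theorem stmt18 (m : ℕ) (hm : 2 ≤ m) (hme : Even m) :
    (∀ j : ℕ, j ≤ m - 1 → j ≠ m / 2 →
        Tendsto (fun a : ℝ => Xtilde m j a) (nhdsWithin (-1) {(-1)}ᶜ) (nhds 0)) ∧
      Tendsto (fun a : ℝ => ‖Xtilde m (m / 2) a‖)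
        (nhdsWithin (-1) {(-1)}ᶜ) (nhds 1) := by
  obtain ⟨c, hc'⟩ := hme
  have hmc : m = 2 * c := by omega
  have hme : Even m := ⟨c, hc'⟩
  have hc : 0 < c := by omega
  have hcm : m / 2 = c := by omega
  have hm0 : 0 < m := by omega
  have hm0R : (m : ℝ) ≠ 0 := Nat.cast_ne_zero.2 (by omega)
  have hne1 : ((-1 : ℝ)) ^ m = 1 := hme.neg_one_pow
  -- √(f m ·) → 0
  have hfcont : ContinuousAt (f m) (-1) := by
    apply ContinuousAt.div (by fun_prop) (by fun_prop)
    have : (m : ℝ) * ((-1 : ℝ) - 1) * ((-1 : ℝ) ^ m + 1) = -4 * m := by rw [hne1]; ring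
    rw [this]
    intro hcon
    apply hm0R
    linarith
  have hf0 : f m (-1) = 0 := by simp [f]
  have hsq : Tendsto (fun a : ℝ => ((Real.sqrt (f m a)) : ℂ)) (nhds (-1 : ℝ)) (nhds 0) := by
    have h1 : ContinuousAt (fun a : ℝ => Real.sqrt (f m a)) (-1) :=
      Real.continuous_sqrt.continuousAt.comp hfcont
    have h2 := Complex.continuous_ofReal.continuousAt.comp h1
    have h3 : Real.sqrt (f m (-1)) = 0 := by rw [hf0, Real.sqrt_zero]
    simpa [ContinuousAt, Function.comp_def, h3] using h2
  constructor
  · -- j ≠ m/2 : tends to 0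
    intro j hj hjc
    rw [hcm] at hjc
    rcases lt_or_gt_of_ne hjc with hlt | hgt
    · -- j < c : X continuous at -1
      have hX : Tendsto (fun a : ℝ => X m j (a : ℂ)) (nhds (-1 : ℝ))
          (nhds (X m j (((-1 : ℝ)) : ℂ))) := by
        simp only [X_eq]
        exact tendsto_finset_prod _ (fun k hk => by
          have hk' : k < j := Finset.mem_range.mp hk
          exact (Fk_cont m k (Dk_ne m c k hmc hc (by omega) (by omega))).tendsto)
      have h2 := (hsq.mul hX).mono_left (nhdsWithin_le_nhds (s := {(-1 : ℝ)}ᶜ))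
      rw [zero_mul] at h2
      exact h2
    · -- j > c
      have hc2 : 2 ≤ c := by omega
      set S := ((Finset.range j).erase c).erase (c - 1) with hS
      set G : ℝ → ℂ := fun a => (Nk m (c - 1) a / Dk m c a) * ∏ k ∈ S, Fk m k a with hG
      have hDc : Dk m c (-1) ≠ 0 := Dk_ne m c c hmc hc (by omega) (by omega)
      have hGcont : Tendsto G (nhds (-1 : ℝ)) (nhds (G (-1))) := by
        apply Tendsto.mul
        · exact (ContinuousAt.div (Nk_cont m (c - 1)).continuousAt
            (Dk_cont m c).continuousAt hDc)
        · exact tendsto_finset_prod _ (fun k hk => by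
            rw [hS] at hk
            simp only [Finset.mem_erase, Finset.mem_range] at hk
            obtain ⟨hk1, hk2, hk3⟩ := hk
            exact (Fk_cont m k (Dk_ne m c k hmc hc (by omega) (by omega))).tendsto)
      have heq : ∀ᶠ a in nhdsWithin (-1 : ℝ) {(-1)}ᶜ,
          Xtilde m j a = ((Real.sqrt (f m a)) : ℂ) * G a := by
        filter_upwards [self_mem_nhdsWithin] with a ha
        have ha' : a ≠ -1 := ha
        unfold Xtilde
        congr 1
        rw [X_eq]
        have hcmem : c ∈ Finset.range j := Finset.mem_range.mpr (by omega)
        have hc1mem : c - 1 ∈ (Finset.range j).erase c := by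
          simp only [Finset.mem_erase, Finset.mem_range]
          omega
        rw [← Finset.mul_prod_erase _ _ hcmem, ← Finset.mul_prod_erase _ _ hc1mem, ← hS]
        have hIa : Complex.I * (1 + (a : ℂ)) ≠ 0 := by
          apply mul_ne_zero Complex.I_ne_zero
          intro hz
          apply ha'
          have : (1 + a : ℝ) = 0 := by exact_mod_cast hz
          linarith
        rw [show Fk m c a * (Fk m (c - 1) a * ∏ k ∈ S, Fk m k a)
            = (Fk m c a * Fk m (c - 1) a) * ∏ k ∈ S, Fk m k a from by ring]
        rw [hG]
        congr 1
        unfold Fk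
        rw [Nc m c hmc hc, Dcm1 m c hmc hc, div_mul_div_comm,
          mul_comm (Complex.I * (1 + (a : ℂ))) (Nk m (c - 1) a),
          mul_div_mul_right _ _ hIa]
      have hlim : Tendsto (fun a : ℝ => ((Real.sqrt (f m a)) : ℂ) * G a)
          (nhdsWithin (-1 : ℝ) {(-1)}ᶜ) (nhds 0) := by
        have := (hsq.mul hGcont).mono_left (nhdsWithin_le_nhds (s := {(-1 : ℝ)}ᶜ))
        rwa [zero_mul] at this
      exact hlim.congr' (Filter.EventuallyEq.symm heq)
  · -- |X̃_{m/2}| → 1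
    rw [hcm]
    have hone : (-1 : ℝ) ≠ 1 := by norm_num
    have hev : ∀ᶠ a in nhdsWithin (-1 : ℝ) {(-1)}ᶜ,
        ‖Xtilde m c a‖ = Real.sqrt (hh m c a) * ‖Pf m c a‖ := by
      filter_upwards [self_mem_nhdsWithin,
        eventually_nhdsWithin_of_eventually_nhds (eventually_ne_nhds hone)] with a ha ha1
      have ha' : a ≠ -1 := ha
      have habs : (1 : ℂ) + (a : ℂ) = ((1 + a : ℝ) : ℂ) := by push_cast; ring
      have hane : |1 + a| ≠ 0 := by
        rw [abs_ne_zero]; intro hz; apply ha'; linarith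
      unfold Xtilde
      rw [norm_mul, Complex.norm_real, Real.norm_eq_abs, abs_of_nonneg (Real.sqrt_nonneg _),
        X_half m c hmc hc a, norm_div, norm_mul, Complex.norm_I, one_mul, habs,
        Complex.norm_real, Real.norm_eq_abs, f_factor m c hmc hm0 hme a ha1,
        Real.sqrt_mul (sq_nonneg _), Real.sqrt_sq_eq_abs]
      rw [show |a + 1| = |1 + a| from by rw [add_comm]]
      field_simp
    have hhcont : ContinuousAt (hh m c) (-1) := by
      apply ContinuousAt.div (by fun_prop) (by fun_prop)
      have : (m : ℝ) * ((-1 : ℝ) ^ m + 1) = 2 * m := by rw [hne1]; ring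
      rw [this]; intro hcon; apply hm0R; linarith
    have hhval : hh m c (-1) = 1 / 4 := by
      unfold hh
      rw [hne1]
      have : ((-1 : ℝ) ^ 2) = 1 := by norm_num
      rw [this]
      simp only [one_pow, Finset.sum_const, Finset.card_range, smul_eq_mul, mul_one]
      rw [hmc]
      have hcR : (c : ℝ) ≠ 0 := Nat.cast_ne_zero.2 hc.ne'
      push_cast
      field_simp
      ring
    have hlim : Tendsto (fun a : ℝ => Real.sqrt (hh m c a) * ‖Pf m c a‖)
        (nhds (-1 : ℝ)) (nhds 1) := by
      have h1 := (Real.continuous_sqrt.continuousAt.comp hhcont).mul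
        (continuous_norm.continuousAt.comp (Pf_cont m c hmc hc))
      have h2 : Real.sqrt (hh m c (-1)) * ‖Pf m c (-1)‖ = 1 := by
        rw [hhval, Pf_val m c hmc hc]
        rw [show (1 / 4 : ℝ) = (1 / 2) ^ 2 by norm_num, Real.sqrt_sq (by norm_num)]
        norm_num
      have h3 : Tendsto (fun a : ℝ => Real.sqrt (hh m c a) * ‖Pf m c a‖)
          (nhds (-1 : ℝ)) (nhds (Real.sqrt (hh m c (-1)) * ‖Pf m c (-1)‖)) := h1
      rwa [h2] at h3
    exact (hlim.mono_left nhdsWithin_le_nhds).congr' (Filter.EventuallyEq.symm hev)
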